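/- Let X be a real Banach space with dim X ≥ 2 and let κ, τ > 0. Then X fails to be uniformly non-square if and only if T₂(κ,τ,X) = κ + τ. -/

import Mathlib

/-- The skew constant `T₂(κ,τ,X) = sup{ (‖κx + τy‖ ‖τx − κy‖)^{1/2} : x, y ∈ S(X) }`. -/
noncomputable def T2 (X : Type*) [NormedAddCommGroup X] [NormedSpace ℝ X] (κ τ : ℝ) : ℝ :=
  sSup {r : ℝ | ∃ x y : X, ‖x‖ = 1 ∧ ‖y‖ = 1 ∧
    r = Real.sqrt (‖κ • x + τ • y‖ * ‖τ • x - κ • y‖)}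

/-- `X` is uniformly non-square: there exists `δ ∈ (0,1)` with
`min(‖x+y‖/2, ‖x−y‖/2) ≤ 1 − δ` for all `x, y` in the unit sphere. -/
def UniformlyNonSquare (X : Type*) [NormedAddCommGroup X] : Prop :=
  ∃ δ : ℝ, 0 < δ ∧ δ < 1 ∧ ∀ x y : X, ‖x‖ = 1 → ‖y‖ = 1 →
    min (‖x + y‖ / 2) (‖x - y‖ / 2) ≤ 1 - δ

set_option maxHeartbeats 1000000 in
/-- For a real Banach space `X` with `dim X ≥ 2` and `κ, τ > 0`,
`X` fails to be uniformly non-square iff `T₂(κ,τ,X) = κ + τ`. -/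
theorem stmt14 {X : Type*} [NormedAddCommGroup X] [NormedSpace ℝ X] [CompleteSpace X]
    (hdim : 2 ≤ Module.rank ℝ X) (κ τ : ℝ) (hκ : 0 < κ) (hτ : 0 < τ) :
    ¬ UniformlyNonSquare X ↔ T2 X κ τ = κ + τ := by
  have hκτ : (0:ℝ) < κ + τ := by linarith
  set S : Set ℝ := {r : ℝ | ∃ x y : X, ‖x‖ = 1 ∧ ‖y‖ = 1 ∧
    r = Real.sqrt (‖κ • x + τ • y‖ * ‖τ • x - κ • y‖)} with hSdef
  have hT2S : T2 X κ τ = sSup S := rfl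
  have hnorm1 : ∀ x y : X, ‖x‖ = 1 → ‖y‖ = 1 → ‖κ • x + τ • y‖ ≤ κ + τ := by
    intro x y hx hy
    calc ‖κ • x + τ • y‖ ≤ ‖κ • x‖ + ‖τ • y‖ := norm_add_le _ _
      _ = κ + τ := by
        rw [norm_smul, norm_smul, hx, hy, Real.norm_eq_abs, Real.norm_eq_abs,
          abs_of_pos hκ, abs_of_pos hτ]; ring
  have hnorm2 : ∀ x y : X, ‖x‖ = 1 → ‖y‖ = 1 → ‖τ • x - κ • y‖ ≤ κ + τ := by
    intro x y hx hy
    calc ‖τ • x - κ • y‖ ≤ ‖τ • x‖ + ‖κ • y‖ := norm_sub_le _ _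
      _ = κ + τ := by
        rw [norm_smul, norm_smul, hx, hy, Real.norm_eq_abs, Real.norm_eq_abs,
          abs_of_pos hκ, abs_of_pos hτ]; ring
  have hbound : ∀ r ∈ S, r ≤ κ + τ := by
    rintro r ⟨x, y, hx, hy, rfl⟩
    calc Real.sqrt (‖κ • x + τ • y‖ * ‖τ • x - κ • y‖)
        ≤ Real.sqrt ((κ + τ) * (κ + τ)) := by
          apply Real.sqrt_le_sqrt
          exact mul_le_mul (hnorm1 x y hx hy) (hnorm2 x y hx hy) (norm_nonneg _) hκτ.le
      _ = κ + τ := Real.sqrt_mul_self hκτ.le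
  have hT2le : T2 X κ τ ≤ κ + τ := by
    rw [hT2S]; exact Real.sSup_le hbound hκτ.le
  constructor
  · -- ¬ UNS → T2 = κ + τ
    intro hnuns
    refine le_antisymm hT2le (le_of_forall_sub_le ?_)
    intro ε hε
    set δ : ℝ := min (ε / (2 * (κ + τ))) (1/4) with hδdef
    have hδpos : 0 < δ := lt_min (by positivity) (by norm_num)
    have hδle : δ ≤ 1/4 := min_le_right _ _
    have hδε : δ ≤ ε / (2 * (κ + τ)) := min_le_left _ _
    have hδ1 : δ < 1 := lt_of_le_of_lt hδle (by norm_num)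
    unfold UniformlyNonSquare at hnuns
    push_neg at hnuns
    obtain ⟨x, y, hx, hy, hmin⟩ := hnuns δ hδpos hδ1
    have hsum : 2 - 2*δ < ‖x + y‖ := by
      have := lt_of_lt_of_le hmin (min_le_left _ _); linarith
    have hdiff : 2 - 2*δ < ‖x - y‖ := by
      have := lt_of_lt_of_le hmin (min_le_right _ _); linarith
    have hxy0 : x + y ≠ 0 := by
      intro h; rw [h, norm_zero] at hsum; linarith
    have hxy0' : x - y ≠ 0 := by
      intro h; rw [h, norm_zero] at hdiff; linarith
    obtain ⟨f, hf1, hf2⟩ := exists_dual_vector ℝ (x + y) (norm_ne_zero_iff.mpr hxy0)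
    obtain ⟨g, hg1, hg2⟩ := exists_dual_vector ℝ (x - y) (norm_ne_zero_iff.mpr hxy0')
    have hfb : ∀ z : X, f z ≤ ‖z‖ := fun z =>
      le_trans (le_abs_self _) (by simpa [hf1] using f.le_opNorm z)
    have hgb : ∀ z : X, g z ≤ ‖z‖ := fun z =>
      le_trans (le_abs_self _) (by simpa [hg1] using g.le_opNorm z)
    have hfxy : f x + f y = ‖x + y‖ := by
      have h : f (x + y) = ‖x + y‖ := by exact_mod_cast hf2
      rw [← h, map_add]
    have hgxy : g x - g y = ‖x - y‖ := by
      have h : g (x - y) = ‖x - y‖ := by exact_mod_cast hg2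
      rw [← h, map_sub]
    have hfx : 1 - 2*δ < f x := by have := hfb y; rw [hy] at this; linarith
    have hfy : 1 - 2*δ < f y := by have := hfb x; rw [hx] at this; linarith
    have hgx : 1 - 2*δ < g x := by
      have h := hgb (-y); rw [norm_neg, hy, map_neg] at h; linarith
    have hgy : g y < -(1 - 2*δ) := by have := hgb x; rw [hx] at this; linarith
    have h2δ : (0:ℝ) ≤ 1 - 2*δ := by linarith
    have ha : (κ + τ) * (1 - 2*δ) ≤ ‖κ • x + τ • y‖ := by
      have hfa : f (κ • x + τ • y) = κ * f x + τ * f y := by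
        rw [map_add, map_smul, map_smul]; rfl
      have h := hfb (κ • x + τ • y)
      have h3 : f (κ • x + τ • y) ≤ ‖κ • x + τ • y‖ := hfb _
      nlinarith [hfx, hfy]
    have hb : (κ + τ) * (1 - 2*δ) ≤ ‖τ • x - κ • y‖ := by
      have hga : g (τ • x - κ • y) = τ * g x - κ * g y := by
        rw [map_sub, map_smul, map_smul]; rfl
      have h3 : g (τ • x - κ • y) ≤ ‖τ • x - κ • y‖ := hgb _
      nlinarith [hgx, hgy]
    have hmemS : Real.sqrt (‖κ • x + τ • y‖ * ‖τ • x - κ • y‖) ∈ S :=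
      ⟨x, y, hx, hy, rfl⟩
    have hc : (0:ℝ) ≤ (κ + τ) * (1 - 2*δ) := mul_nonneg hκτ.le h2δ
    have hge : (κ + τ) * (1 - 2*δ) ≤ Real.sqrt (‖κ • x + τ • y‖ * ‖τ • x - κ • y‖) := by
      calc (κ + τ) * (1 - 2*δ)
          = Real.sqrt (((κ + τ) * (1 - 2*δ)) * ((κ + τ) * (1 - 2*δ))) :=
            (Real.sqrt_mul_self hc).symm
        _ ≤ _ := Real.sqrt_le_sqrt (mul_le_mul ha hb hc (norm_nonneg _))
    have hle : Real.sqrt (‖κ • x + τ • y‖ * ‖τ • x - κ • y‖) ≤ T2 X κ τ := by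
      rw [hT2S]; exact le_csSup ⟨κ + τ, hbound⟩ hmemS
    have hεδ : δ * (2 * (κ + τ)) ≤ ε := (le_div_iff₀ (by positivity)).mp hδε
    have hring : (κ + τ) * (1 - 2*δ) = κ + τ - δ * (2 * (κ + τ)) := by ring
    linarith [hge, hle]
  · -- T2 = κ + τ → ¬ UNS
    intro hT2 huns
    obtain ⟨δ, hδ0, hδ1, huns⟩ := huns
    set m : ℝ := min κ τ with hm
    have hm0 : 0 < m := lt_min hκ hτ
    have hmκ : m ≤ κ := min_le_left _ _
    have hmτ : m ≤ τ := min_le_right _ _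
    have hC0 : (0:ℝ) ≤ κ + τ - 2 * m * δ := by nlinarith
    have hkey : ∀ r ∈ S, r ≤ Real.sqrt ((κ + τ) * (κ + τ - 2 * m * δ)) := by
      rintro r ⟨x, y, hx, hy, rfl⟩
      have h1 := hnorm1 x y hx hy
      have h2 := hnorm2 x y hx hy
      have hprod : ‖κ • x + τ • y‖ * ‖τ • x - κ • y‖ ≤ (κ + τ) * (κ + τ - 2 * m * δ) := by
        rcases min_le_iff.mp (huns x y hx hy) with hcase | hcase
        · -- ‖x + y‖ ≤ 2 (1 - δ); bound first factor
          have hd : κ • x + τ • y = m • (x + y) + ((κ - m) • x + (τ - m) • y) := by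
            module
          have ha : ‖κ • x + τ • y‖ ≤ κ + τ - 2 * m * δ := by
            calc ‖κ • x + τ • y‖ = ‖m • (x + y) + ((κ - m) • x + (τ - m) • y)‖ := by rw [hd]
              _ ≤ ‖m • (x + y)‖ + (‖(κ - m) • x‖ + ‖(τ - m) • y‖) :=
                  le_trans (norm_add_le _ _) (by gcongr; exact norm_add_le _ _)
              _ = m * ‖x + y‖ + ((κ - m) + (τ - m)) := by
                  rw [norm_smul, norm_smul, norm_smul, hx, hy, Real.norm_eq_abs,
                    Real.norm_eq_abs, Real.norm_eq_abs, abs_of_pos hm0,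
                    abs_of_nonneg (by linarith : (0:ℝ) ≤ κ - m),
                    abs_of_nonneg (by linarith : (0:ℝ) ≤ τ - m)]; ring
              _ ≤ κ + τ - 2 * m * δ := by nlinarith
          nlinarith [norm_nonneg (τ • x - κ • y), norm_nonneg (κ • x + τ • y)]
        · -- ‖x - y‖ ≤ 2 (1 - δ); bound second factor
          have hd : τ • x - κ • y = m • (x - y) + ((τ - m) • x - (κ - m) • y) := by
            module
          have hb : ‖τ • x - κ • y‖ ≤ κ + τ - 2 * m * δ := by
            calc ‖τ • x - κ • y‖ = ‖m • (x - y) + ((τ - m) • x - (κ - m) • y)‖ := by rw [hd]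
              _ ≤ ‖m • (x - y)‖ + (‖(τ - m) • x‖ + ‖(κ - m) • y‖) :=
                  le_trans (norm_add_le _ _) (by gcongr; exact norm_sub_le _ _)
              _ = m * ‖x - y‖ + ((τ - m) + (κ - m)) := by
                  rw [norm_smul, norm_smul, norm_smul, hx, hy, Real.norm_eq_abs,
                    Real.norm_eq_abs, Real.norm_eq_abs, abs_of_pos hm0,
                    abs_of_nonneg (by linarith : (0:ℝ) ≤ τ - m),
                    abs_of_nonneg (by linarith : (0:ℝ) ≤ κ - m)]; ring
              _ ≤ κ + τ - 2 * m * δ := by nlinarith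
          nlinarith [norm_nonneg (τ • x - κ • y), norm_nonneg (κ • x + τ • y)]
      exact Real.sqrt_le_sqrt hprod
    have hlt : Real.sqrt ((κ + τ) * (κ + τ - 2 * m * δ)) < κ + τ := by
      have hstrict : (κ + τ) * (κ + τ - 2 * m * δ) < (κ + τ) * (κ + τ) := by nlinarith [mul_pos hκτ (mul_pos (mul_pos two_pos hm0) hδ0)]
      calc Real.sqrt ((κ + τ) * (κ + τ - 2 * m * δ))
          < Real.sqrt ((κ + τ) * (κ + τ)) :=
            Real.sqrt_lt_sqrt (by positivity) hstrict
        _ = κ + τ := Real.sqrt_mul_self hκτ.le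
    have : T2 X κ τ < κ + τ := by
      rw [hT2S]
      exact lt_of_le_of_lt (Real.sSup_le hkey (Real.sqrt_nonneg _)) hlt
    rw [hT2] at this
    exact lt_irrefl _ this
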